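/- Let ℓ ≥ -1 be an integer and n ≥ 6ℓ+26. Let G be an n-vertex K_4-free graph with degree sequence d_1 ≤ ⋯ ≤ d_n. If there is an integer j with 1 ≤ j ≤ (n-1-ℓ)/2 such that d_j ≤ j + ℓ, then e(G) ≤ ⌊n²/3 - 2n/3 + (3ℓ+4)/3⌋ = e(T_3(n-1)) + ℓ + 1. -/

import Mathlib

open Finset SimpleGraph

/-- The number of naturals below `m` congruent to `r` mod 3. -/
lemma count_mod3' (r : ℕ) (hr : r < 3) (m : ℕ) :
    #{i ∈ Finset.range m | i % 3 = r} = (m + 2 - r) / 3 := by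
  induction m with
  | zero => simp; omega
  | succ m ih =>
    rw [Finset.range_add_one, Finset.filter_insert]
    by_cases h : m % 3 = r
    · rw [if_pos h, Finset.card_insert_of_notMem (by simp)]
      omega
    · rw [if_neg h]
      omega

lemma fin_count_mod3' {m : ℕ} (r : ℕ) :
    #{w : Fin m | (w : ℕ) % 3 = r} = #{i ∈ Finset.range m | i % 3 = r} := by
  rw [Finset.card_filter, Finset.card_filter]
  exact Fin.sum_univ_eq_sum_range (fun i => if i % 3 = r then 1 else 0) m

/-- Degrees in the tripartite Turán graph. -/
lemma turan3_degree' {m : ℕ} (v : Fin m) :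
    (turanGraph m 3).degree v = m - (m + 2 - (v : ℕ) % 3) / 3 := by
  rw [← SimpleGraph.card_neighborFinset_eq_degree, neighborFinset_eq_filter]
  have h1 : #{w : Fin m | (turanGraph m 3).Adj v w}
      + #{w : Fin m | (w : ℕ) % 3 = (v : ℕ) % 3} = m := by
    rw [show #{w : Fin m | (w : ℕ) % 3 = (v : ℕ) % 3}
        = #{w : Fin m | ¬ (turanGraph m 3).Adj v w} from ?_]
    · rw [Finset.card_filter_add_card_filter_not, Finset.card_univ, Fintype.card_fin]
    · congr 1
      ext w
      simp [turanGraph, eq_comm]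
  have h2 := fin_count_mod3' (m := m) ((v : ℕ) % 3)
  rw [count_mod3' _ (Nat.mod_lt _ (by norm_num)) m] at h2
  omega

lemma sum_mod3' (m : ℕ) (f : ℕ → ℕ) :
    ∑ i ∈ Finset.range m, f (i % 3)
      = (m + 2) / 3 * f 0 + (m + 1) / 3 * f 1 + m / 3 * f 2 := by
  induction m with
  | zero => simp
  | succ m ih =>
    rw [Finset.sum_range_succ, ih]
    have h3 : m % 3 = 0 ∨ m % 3 = 1 ∨ m % 3 = 2 := by omega
    rcases h3 with h | h | h <;> rw [h] <;>
      · rw [show (m + 1 + 2) / 3 = (m + 2) / 3 + (if m % 3 = 0 then 1 else 0) by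
            split <;> omega,
          show (m + 1 + 1) / 3 = (m + 1) / 3 + (if m % 3 = 1 then 1 else 0) by
            split <;> omega,
          show (m + 1) / 3 = m / 3 + (if m % 3 = 2 then 1 else 0) by
            split <;> omega]
        simp [h]
        ring

/-- Exact edge count of the tripartite Turán graph. -/
lemma turan3_card' (m : ℕ) : #(turanGraph m 3).edgeFinset = m ^ 2 / 3 := by
  have hsum := SimpleGraph.sum_degrees_eq_twice_card_edges (turanGraph m 3)
  have h1 : ∑ v : Fin m, (turanGraph m 3).degree v
      = ∑ i ∈ Finset.range m, (m - (m + 2 - i % 3) / 3) := by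
    rw [← Fin.sum_univ_eq_sum_range (fun i => m - (m + 2 - i % 3) / 3) m]
    exact Finset.sum_congr rfl fun v _ => turan3_degree' v
  rw [h1, sum_mod3' m (fun r => m - (m + 2 - r) / 3)] at hsum
  obtain ⟨q, r, hr, rfl⟩ : ∃ q r, r < 3 ∧ m = 3 * q + r :=
    ⟨m / 3, m % 3, by omega, by omega⟩
  interval_cases r
  · rw [show (3*q+0+2)/3 = q by omega, show (3*q+0+1)/3 = q by omega,
      show (3*q+0)/3 = q by omega, show (3*q+0+2-0)/3 = q by omega,
      show (3*q+0+2-1)/3 = q by omega, show (3*q+0+2-2)/3 = q by omega,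
      show 3*q+0-q = 2*q by omega] at hsum
    rw [show (3*q+0)^2 = 3*(3*q^2) by ring, Nat.mul_div_cancel_left _ (by norm_num)]
    linarith [hsum]
  · rw [show (3*q+1+2)/3 = q+1 by omega, show (3*q+1+1)/3 = q by omega,
      show (3*q+1)/3 = q by omega, show (3*q+1+2-0)/3 = q+1 by omega,
      show (3*q+1+2-1)/3 = q by omega, show (3*q+1+2-2)/3 = q by omega,
      show 3*q+1-(q+1) = 2*q by omega, show 3*q+1-q = 2*q+1 by omega] at hsum
    rw [show (3*q+1)^2 = 3*(3*q^2+2*q)+1 by ring, Nat.mul_add_div (by norm_num),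
      show (1:ℕ)/3 = 0 by norm_num, Nat.add_zero]
    linarith [hsum]
  · rw [show (3*q+2+2)/3 = q+1 by omega, show (3*q+2+1)/3 = q+1 by omega,
      show (3*q+2)/3 = q by omega, show (3*q+2+2-0)/3 = q+1 by omega,
      show (3*q+2+2-1)/3 = q+1 by omega, show (3*q+2+2-2)/3 = q by omega,
      show 3*q+2-(q+1) = 2*q+1 by omega, show 3*q+2-q = 2*q+2 by omega] at hsum
    rw [show (3*q+2)^2 = 3*(3*q^2+4*q+1)+1 by ring, Nat.mul_add_div (by norm_num),
      show (1:ℕ)/3 = 0 by norm_num, Nat.add_zero]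
    linarith [hsum]

/-- Turán's theorem for `K₄`-free graphs. -/
lemma K4free_edge_bound' {V : Type} [Fintype V] [DecidableEq V]
    (G : SimpleGraph V) [DecidableRel G.Adj] (h : G.CliqueFree 4) :
    G.edgeFinset.card ≤ (Fintype.card V) ^ 2 / 3 := by
  obtain ⟨H, hd, hmax⟩ := exists_isTuranMaximal (V := V) (r := 3) (by norm_num)
  have h1 : #G.edgeFinset ≤ #H.edgeFinset := hmax.2 h
  obtain ⟨f⟩ := hmax.nonempty_iso_turanGraph
  rw [f.card_edgeFinset_eq, turan3_card'] at h1
  exact h1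

/-- Deleting a vertex set `K` from a `K₄`-free graph. -/
lemma key_deletion' {V : Type} [Fintype V] [DecidableEq V]
    (G : SimpleGraph V) [DecidableRel G.Adj] (h4 : G.CliqueFree 4) (K : Finset V) :
    G.edgeFinset.card ≤ (Fintype.card V - #K) ^ 2 / 3 + ∑ v ∈ K, G.degree v := by
  classical
  set s : Set V := ((Kᶜ : Finset V) : Set V) with hs
  have hcards : Fintype.card s = Fintype.card V - #K := by
    rw [← Set.toFinset_card]
    simp [hs, Finset.card_compl]
  have hfree' : (G.induce s).CliqueFree 4 := h4.comap (Embedding.induce s).isContained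
  have hbound : #(G.induce s).edgeFinset ≤ (Fintype.card V - #K) ^ 2 / 3 := by
    have := K4free_edge_bound' (G.induce s) hfree'
    rwa [hcards] at this
  have hcover : G.edgeFinset ⊆
      (K.biUnion (fun v => G.incidenceFinset v))
        ∪ ((G.induce s).edgeFinset.image (Sym2.map Subtype.val)) := by
    intro e he
    induction e with
    | h a b =>
      rw [mem_edgeFinset, mem_edgeSet] at he
      by_cases ha : a ∈ K
      · exact Finset.mem_union_left _ (Finset.mem_biUnion.2 ⟨a, ha,
          (G.mem_incidenceFinset _ _).2 ⟨(G.mem_edgeSet).2 he, Sym2.mem_mk_left a b⟩⟩)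
      by_cases hb : b ∈ K
      · exact Finset.mem_union_left _ (Finset.mem_biUnion.2 ⟨b, hb,
          (G.mem_incidenceFinset _ _).2 ⟨(G.mem_edgeSet).2 he, Sym2.mem_mk_right a b⟩⟩)
      · refine Finset.mem_union_right _ (Finset.mem_image.2
          ⟨s(⟨a, by simp [hs, ha]⟩, ⟨b, by simp [hs, hb]⟩), ?_, rfl⟩)
        rw [mem_edgeFinset, mem_edgeSet]
        exact he
  calc #G.edgeFinset
      ≤ #((K.biUnion (fun v => G.incidenceFinset v))
          ∪ ((G.induce s).edgeFinset.image (Sym2.map Subtype.val))) :=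
        Finset.card_le_card hcover
    _ ≤ #(K.biUnion (fun v => G.incidenceFinset v))
          + #((G.induce s).edgeFinset.image (Sym2.map Subtype.val)) :=
        Finset.card_union_le _ _
    _ ≤ (∑ v ∈ K, G.degree v) + #(G.induce s).edgeFinset := by
        gcongr
        · calc #(K.biUnion (fun v => G.incidenceFinset v))
              ≤ ∑ v ∈ K, #(G.incidenceFinset v) := Finset.card_biUnion_le
            _ = ∑ v ∈ K, G.degree v :=
              Finset.sum_congr rfl fun v _ => G.card_incidenceFinset_eq_degree v
        · exact Finset.card_image_le
    _ ≤ (∑ v ∈ K, G.degree v) + (Fintype.card V - #K) ^ 2 / 3 := by gcongr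
    _ = _ := by ring

/-- Choice of the number of low-degree vertices to delete. -/
lemma choose_k' (n j ℓ : ℤ) (hl : -1 ≤ ℓ) (hn : 6*ℓ+26 ≤ n) (hj : 1 ≤ j)
    (hjn : 2*j ≤ n-1-ℓ) :
    ∃ k : ℤ, 1 ≤ k ∧ k ≤ j ∧ (n-k)^2 + 3*k*(j+ℓ) ≤ n^2 - 2*n + 3*ℓ + 4 := by
  by_cases hc : 4*j + 4 + 3*ℓ ≤ 2*n
  · exact ⟨j, hj, le_refl j,
      by nlinarith [mul_nonneg (sub_nonneg.2 hj) (sub_nonneg.2 hc)]⟩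
  · push_neg at hc
    set k : ℤ := (2*n - 3*j - 3*ℓ)/2 with hk
    set u : ℤ := (2*n - 3*j - 3*ℓ) % 2 with hu
    have hdiv : 2*k + u = 2*n - 3*j - 3*ℓ := by
      rw [hk, hu]; omega
    have hu01 : 0 ≤ u ∧ u ≤ 1 := by rw [hu]; omega
    have hj10 : 10 ≤ j := by linarith
    have hk1 : 1 ≤ k := by omega
    have hkj : k ≤ j := by omega
    refine ⟨k, hk1, hkj, ?_⟩
    have h1 : 2*(2*n-3*j-3*ℓ) ≥ n+3-3*ℓ := by linarith
    have h2 : (0:ℤ) ≤ n+3-3*ℓ := by linarith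
    nlinarith [sq_nonneg (n - 3*ℓ - 26),
      mul_nonneg (by linarith : (0:ℤ) ≤ 2*(2*n-3*j-3*ℓ) - (n+3-3*ℓ))
        (by linarith : (0:ℤ) ≤ 2*(2*n-3*j-3*ℓ) + (n+3-3*ℓ)),
      mul_nonneg hu01.1 (by linarith : (0:ℤ) ≤ 1 - u),
      hn, hl, hu01.1, hu01.2]

lemma floor_int_div3' (A : ℤ) : ⌊(A : ℝ)/3⌋ = A / 3 := by
  have h : ((A : ℝ)/3) = (((A : ℚ) / ((3:ℕ) : ℚ) : ℚ) : ℝ) := by push_cast; ring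
  rw [h, Rat.floor_cast, Rat.floor_intCast_div_natCast]
  norm_num

/-- Theorem 4.8: Let `ℓ ≥ -1` and `n ≥ 6ℓ+26`.  If `G` is an `n`-vertex `K_4`-free graph
with `j` vertices of degree at most `j+ℓ` for some `1 ≤ j ≤ (n-1-ℓ)/2`, then
`e(G) ≤ ⌊n²/3 - 2n/3 + (3ℓ+4)/3⌋ = e(T_3(n-1)) + ℓ + 1`. -/
theorem K4free_low_degree_edge_bound
    {V : Type} [Fintype V] [DecidableEq V]
    (G : SimpleGraph V) [DecidableRel G.Adj] (n : ℕ) (ℓ : ℤ)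
    (hl : -1 ≤ ℓ) (hn : (6 : ℤ) * ℓ + 26 ≤ n)
    (hcard : Fintype.card V = n)
    (hfree : G.CliqueFree 4)
    (hdegcond : ∃ (j : ℕ) (J : Finset V), 1 ≤ j ∧ (2 * j : ℤ) ≤ (n : ℤ) - 1 - ℓ ∧
      J.card = j ∧ ∀ v ∈ J, (G.degree v : ℤ) ≤ (j : ℤ) + ℓ) :
    (G.edgeFinset.card : ℤ) ≤
        ⌊(n : ℝ) ^ 2 / 3 - 2 * n / 3 + (3 * (ℓ : ℝ) + 4) / 3⌋ ∧
      ⌊(n : ℝ) ^ 2 / 3 - 2 * n / 3 + (3 * (ℓ : ℝ) + 4) / 3⌋ =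
        ((SimpleGraph.turanGraph (n - 1) 3).edgeFinset.card : ℤ) + ℓ + 1 := by
  obtain ⟨j, J, hj1, hjn, hJcard, hJdeg⟩ := hdegcond
  have hn26 : (20 : ℤ) ≤ (n : ℤ) := by linarith
  have hnn : (20 : ℕ) ≤ n := by exact_mod_cast hn26
  -- rewrite the floor expression
  have hfl : ⌊(n : ℝ) ^ 2 / 3 - 2 * n / 3 + (3 * (ℓ : ℝ) + 4) / 3⌋
      = ((n : ℤ)^2 - 2*n + 3*ℓ + 4) / 3 := by
    rw [show (n : ℝ) ^ 2 / 3 - 2 * n / 3 + (3 * (ℓ : ℝ) + 4) / 3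
        = ((((n : ℤ)^2 - 2*n + 3*ℓ + 4) : ℤ) : ℝ) / 3 by push_cast; ring]
    exact floor_int_div3' _
  constructor
  · -- the main edge bound
    obtain ⟨k, hk1, hkj, hkineq⟩ := choose_k' n j ℓ hl hn (by exact_mod_cast hj1) hjn
    -- k as a natural number
    set kn : ℕ := k.toNat with hkn
    have hknk : (kn : ℤ) = k := Int.toNat_of_nonneg (by linarith)
    have hknj : kn ≤ j := by omega
    obtain ⟨K, hKJ, hKcard⟩ := Finset.exists_subset_card_eq (by omega : kn ≤ #J)
    have hkey := key_deletion' G hfree K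
    rw [hcard, hKcard] at hkey
    have hkn_le_n : kn ≤ n := by
      have := hjn
      omega
    -- sum of degrees bound
    have hsum : ((∑ v ∈ K, G.degree v : ℕ) : ℤ) ≤ (kn : ℤ) * ((j : ℤ) + ℓ) := by
      push_cast
      calc ∑ v ∈ K, (G.degree v : ℤ) ≤ ∑ v ∈ K, ((j : ℤ) + ℓ) :=
            Finset.sum_le_sum fun v hv => hJdeg v (hKJ hv)
        _ = (kn : ℤ) * ((j : ℤ) + ℓ) := by rw [Finset.sum_const, hKcard]; push_cast; ring
    -- from the ℕ bound to a 3e ≤ ... bound over ℤ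
    have h3e : 3 * (#G.edgeFinset : ℤ) ≤ (((n - kn : ℕ)) : ℤ)^2
        + 3 * ((∑ v ∈ K, G.degree v : ℕ) : ℤ) := by
      have h1 : 3 * #G.edgeFinset ≤ (n - kn)^2 + 3 * (∑ v ∈ K, G.degree v) := by
        have h2 := hkey
        generalize hA : (n - kn)^2 = A at h2 ⊢
        omega
      exact_mod_cast h1
    have hcast : (((n - kn : ℕ)) : ℤ) = (n : ℤ) - (kn : ℤ) := by
      push_cast [Nat.cast_sub hkn_le_n]; ring
    rw [hcast, hknk] at h3e
    have h3e2 : 3 * (#G.edgeFinset : ℤ) ≤ (n : ℤ)^2 - 2*n + 3*ℓ + 4 := by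
      calc 3 * (#G.edgeFinset : ℤ) ≤ ((n : ℤ) - k)^2 + 3 * ((kn : ℤ) * ((j : ℤ) + ℓ)) := by
            linarith [hsum]
        _ = ((n : ℤ) - k)^2 + 3 * k * ((j : ℤ) + ℓ) := by rw [hknk]; ring
        _ ≤ (n : ℤ)^2 - 2*n + 3*ℓ + 4 := hkineq
    rw [hfl]
    omega
  · -- the identification of the floor with e(T₃(n-1)) + ℓ + 1
    rw [hfl, turan3_card']
    have hc1 : (((n-1)^2/3 : ℕ) : ℤ) = (((n-1 : ℕ) : ℤ))^2 / 3 := by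
      push_cast [Int.natCast_div]
      norm_num
    rw [hc1, show (((n-1 : ℕ)) : ℤ) = (n : ℤ) - 1 by omega]
    have h2 : (n : ℤ)^2 - 2*n + 3*ℓ + 4 = ((n : ℤ) - 1)^2 + (ℓ + 1) * 3 := by ring
    rw [h2, Int.add_mul_ediv_right _ _ (by norm_num : (3:ℤ) ≠ 0)]
    ring
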